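/- arXiv:2111.06846 — 2 statements merged into one kernel-verified Lean document; each statement's English description precedes it below -/
import Mathlib

section
/- Let μ and ν be Borel probability measures on ℝ with finite first moments and distribution functions F_μ and F_ν. Then the L¹-Wasserstein distance satisfies W₁(μ, ν) = ∫_ℝ |F_μ(x) − F_ν(x)| dx. -/
open MeasureTheory Set ENNReal

/-- The L¹-Wasserstein (Kantorovich) distance between two Borel measures on ℝ,
defined as the infimum over all couplings of the expected absolute difference. -/
noncomputable def W1 (μ ν : Measure ℝ) : ℝ≥0∞ :=
  ⨅ (γ : Measure (ℝ × ℝ)) (_ : γ.map Prod.fst = μ ∧ γ.map Prod.snd = ν),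
    ∫⁻ p, ENNReal.ofReal |p.1 - p.2| ∂γ

open Filter ProbabilityTheory

set_option linter.unusedSectionVars false

section quantile
variable (μ : Measure ℝ) [IsProbabilityMeasure μ]


/-- extended quantile function -/
noncomputable def Qf (s : ℝ) : ℝ :=
  if 0 < s ∧ s < 1 then sInf {x | s ≤ cdf μ x} else 0

lemma Qf_le_iff {s : ℝ} (hs : 0 < s) (hs1 : s < 1) (t : ℝ) :
    Qf μ s ≤ t ↔ s ≤ cdf μ t := by
  have hne : {x | s ≤ cdf μ x}.Nonempty := by
    obtain ⟨x, hx⟩ := ((tendsto_cdf_atTop μ).eventually_const_lt hs1).exists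
    replace hx := hx.le
    exact ⟨x, hx⟩
  have hbdd : BddBelow {x | s ≤ cdf μ x} := by
    obtain ⟨x₀, hx₀⟩ := ((tendsto_cdf_atBot μ).eventually_lt_const hs).exists
    refine ⟨x₀, fun x hx => ?_⟩
    by_contra h
    exact absurd (hx.trans (monotone_cdf μ (le_of_not_ge h))) (not_le.2 hx₀)
  rw [Qf, if_pos ⟨hs, hs1⟩]
  constructor
  · intro h
    have key : ∀ u, t < u → s ≤ cdf μ u := by
      intro u hu
      obtain ⟨x, hx, hxu⟩ := (csInf_lt_iff hbdd hne).1 (lt_of_le_of_lt h hu)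
      exact hx.trans (monotone_cdf μ hxu.le)
    have hcont : ContinuousWithinAt (cdf μ) (Ioi t) t :=
      ((cdf μ).right_continuous t).mono Ioi_subset_Ici_self
    refine ge_of_tendsto hcont ?_
    filter_upwards [self_mem_nhdsWithin] with u hu using key u hu
  · intro h
    exact csInf_le hbdd h


lemma measurable_Qf : Measurable (Qf μ) := by
  refine measurable_of_Iic fun t => ?_
  have : Qf μ ⁻¹' Iic t =
      (Ioo (0:ℝ) 1 ∩ Iic (cdf μ t)) ∪ ((Ioo (0:ℝ) 1)ᶜ ∩ {s | (0:ℝ) ≤ t}) := by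
    ext s
    by_cases hs : s ∈ Ioo (0:ℝ) 1
    · simp only [mem_preimage, mem_Iic, mem_union, mem_inter_iff, hs, mem_compl_iff,
        not_true_eq_false, false_and, or_false, true_and]
      exact Qf_le_iff μ hs.1 hs.2 t
    · simp only [mem_preimage, mem_Iic, mem_union, mem_inter_iff, hs, false_and, false_or,
        mem_compl_iff, not_false_eq_true, true_and, mem_setOf_eq]
      rw [Qf, if_neg (by simpa [mem_Ioo] using hs)]
  rw [this]
  by_cases ht : (0:ℝ) ≤ t
  · have : {s : ℝ | (0:ℝ) ≤ t} = univ := eq_univ_of_forall fun _ => ht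
    rw [this]
    exact (measurableSet_Ioo.inter measurableSet_Iic).union
      (measurableSet_Ioo.compl.inter MeasurableSet.univ)
  · have : {s : ℝ | (0:ℝ) ≤ t} = ∅ := eq_empty_of_forall_notMem fun _ => ht
    rw [this]
    simp [measurableSet_Ioo.inter measurableSet_Iic]

lemma vol_Ioc_inter {a b : ℝ} (ha : 0 ≤ a) (hb : b ≤ 1) :
    volume (Ioc a b ∩ Ioo 0 1) = ENNReal.ofReal (b - a) := by
  rcases le_or_gt b a with h | h
  · rw [Ioc_eq_empty (not_lt.2 h), empty_inter, measure_empty,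
      Eq.comm, ENNReal.ofReal_eq_zero]
    linarith
  · refine le_antisymm ?_ ?_
    · calc volume (Ioc a b ∩ Ioo 0 1) ≤ volume (Ioc a b) := measure_mono inter_subset_left
        _ = ENNReal.ofReal (b - a) := Real.volume_Ioc
    · calc ENNReal.ofReal (b - a) = volume (Ioo a b) := Real.volume_Ioo.symm
        _ ≤ volume (Ioc a b ∩ Ioo 0 1) := by
            refine measure_mono fun s hs => ⟨⟨hs.1, hs.2.le⟩, ⟨lt_of_le_of_lt ha hs.1,
              lt_of_lt_of_le hs.2 hb⟩⟩

instance : IsProbabilityMeasure (volume.restrict (Ioo (0:ℝ) 1)) := by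
  constructor
  rw [Measure.restrict_apply_univ, Real.volume_Ioo]
  norm_num

lemma preimage_Qf_inter (t : ℝ) :
    Qf μ ⁻¹' Iic t ∩ Ioo 0 1 = Iic (cdf μ t) ∩ Ioo 0 1 := by
  ext s
  simp only [mem_inter_iff, mem_preimage, mem_Iic, and_congr_left_iff]
  intro hs
  exact Qf_le_iff μ hs.1 hs.2 t

lemma map_Qf : Measure.map (Qf μ) (volume.restrict (Ioo 0 1)) = μ := by
  haveI : IsProbabilityMeasure (Measure.map (Qf μ) (volume.restrict (Ioo (0:ℝ) 1))) :=
    Measure.isProbabilityMeasure_map (measurable_Qf μ).aemeasurable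
  refine Measure.ext_of_Iic _ _ fun t => ?_
  rw [Measure.map_apply (measurable_Qf μ) measurableSet_Iic,
    Measure.restrict_apply ((measurable_Qf μ) measurableSet_Iic),
    preimage_Qf_inter]
  have : Iic (cdf μ t) ∩ Ioo (0:ℝ) 1 = Ioc 0 (cdf μ t) ∩ Ioo 0 1 := by
    ext s
    simp only [mem_inter_iff, mem_Iic, mem_Ioc, mem_Ioo]
    tauto
  rw [this, vol_Ioc_inter le_rfl (cdf_le_one μ t), sub_zero, ofReal_cdf]

end quantile

lemma ofReal_abs_eq (x y : ℝ) :
    ENNReal.ofReal |x - y| = volume (Ico x y) + volume (Ico y x) := by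
  rw [Real.volume_Ico, Real.volume_Ico]
  rcases le_total x y with h | h
  · rw [abs_of_nonpos (by linarith), ENNReal.ofReal_of_nonpos (by linarith : x - y ≤ 0),
      add_zero, neg_sub]
  · rw [abs_of_nonneg (by linarith), ENNReal.ofReal_of_nonpos (by linarith : y - x ≤ 0),
      zero_add]

lemma swap_lemma (γ : Measure (ℝ × ℝ)) [IsProbabilityMeasure γ] :
    ∫⁻ p, ENNReal.ofReal |p.1 - p.2| ∂γ
      = ∫⁻ t, (γ {p : ℝ × ℝ | p.1 ≤ t ∧ t < p.2} + γ {p : ℝ × ℝ | p.2 ≤ t ∧ t < p.1}) := by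
  have hA : ∀ t : ℝ, MeasurableSet {p : ℝ × ℝ | p.1 ≤ t ∧ t < p.2} := fun t =>
    (measurableSet_le measurable_fst measurable_const).inter
      (measurableSet_lt measurable_const measurable_snd)
  have hB : ∀ t : ℝ, MeasurableSet {p : ℝ × ℝ | p.2 ≤ t ∧ t < p.1} := fun t =>
    (measurableSet_le measurable_snd measurable_const).inter
      (measurableSet_lt measurable_const measurable_fst)
  have step1 : ∀ p : ℝ × ℝ, ENNReal.ofReal |p.1 - p.2|
      = ∫⁻ t, ((Ico p.1 p.2).indicator 1 t + (Ico p.2 p.1).indicator 1 t) := by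
    intro p
    have m1 : Measurable ((Ico p.1 p.2).indicator (1 : ℝ → ℝ≥0∞)) :=
      measurable_one.indicator measurableSet_Ico
    rw [lintegral_add_left m1,
      lintegral_indicator_one measurableSet_Ico, lintegral_indicator_one measurableSet_Ico,
      ofReal_abs_eq]
  have hmeas : Measurable (Function.uncurry fun (p : ℝ × ℝ) (t : ℝ) =>
      (Ico p.1 p.2).indicator (1 : ℝ → ℝ≥0∞) t + (Ico p.2 p.1).indicator 1 t) := by
    have e : (Function.uncurry fun (p : ℝ × ℝ) (t : ℝ) =>
        (Ico p.1 p.2).indicator (1 : ℝ → ℝ≥0∞) t + (Ico p.2 p.1).indicator 1 t)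
        = fun q : (ℝ × ℝ) × ℝ =>
          ({q : (ℝ × ℝ) × ℝ | q.1.1 ≤ q.2 ∧ q.2 < q.1.2}.indicator 1 q
            + {q : (ℝ × ℝ) × ℝ | q.1.2 ≤ q.2 ∧ q.2 < q.1.1}.indicator 1 q) := by
      ext q
      simp [Function.uncurry, Set.indicator_apply, mem_Ico]
    rw [e]
    exact ((measurable_one.indicator
        ((measurableSet_le measurable_fst.fst measurable_snd).inter
          (measurableSet_lt measurable_snd measurable_fst.snd)))).add
      (measurable_one.indicator
        ((measurableSet_le measurable_fst.snd measurable_snd).inter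
          (measurableSet_lt measurable_snd measurable_fst.fst)))
  calc ∫⁻ p, ENNReal.ofReal |p.1 - p.2| ∂γ
      = ∫⁻ (p : ℝ × ℝ), (∫⁻ t, ((Ico p.1 p.2).indicator (1 : ℝ → ℝ≥0∞) t + (Ico p.2 p.1).indicator 1 t)) ∂γ := by
        exact lintegral_congr step1
    _ = ∫⁻ t, (∫⁻ (p : ℝ × ℝ), ((Ico p.1 p.2).indicator (1 : ℝ → ℝ≥0∞) t + (Ico p.2 p.1).indicator 1 t) ∂γ) := by
        exact lintegral_lintegral_swap hmeas.aemeasurable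
    _ = ∫⁻ t, (γ {p : ℝ × ℝ | p.1 ≤ t ∧ t < p.2} + γ {p : ℝ × ℝ | p.2 ≤ t ∧ t < p.1}) := by
        refine lintegral_congr fun t => ?_
        have e1 : (fun p : ℝ × ℝ => (Ico p.1 p.2).indicator (1 : ℝ → ℝ≥0∞) t)
            = {p : ℝ × ℝ | p.1 ≤ t ∧ t < p.2}.indicator 1 := by
          ext p; simp [Set.indicator_apply, mem_Ico]
        have e2 : (fun p : ℝ × ℝ => (Ico p.2 p.1).indicator (1 : ℝ → ℝ≥0∞) t)
            = {p : ℝ × ℝ | p.2 ≤ t ∧ t < p.1}.indicator 1 := by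
          ext p; simp [Set.indicator_apply, mem_Ico]
        rw [lintegral_add_left, e1, e2,
          lintegral_indicator_one (hA t), lintegral_indicator_one (hB t)]
        rw [e1]
        exact measurable_one.indicator (hA t)

section coupling
variable (μ ν : Measure ℝ) [IsProbabilityMeasure μ] [IsProbabilityMeasure ν]

lemma hA (t : ℝ) : MeasurableSet {p : ℝ × ℝ | p.1 ≤ t ∧ t < p.2} :=
  (measurableSet_le measurable_fst measurable_const).inter
    (measurableSet_lt measurable_const measurable_snd)
lemma hB (t : ℝ) : MeasurableSet {p : ℝ × ℝ | p.2 ≤ t ∧ t < p.1} :=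
  (measurableSet_le measurable_snd measurable_const).inter
    (measurableSet_lt measurable_const measurable_fst)

variable (μ ν : Measure ℝ) [IsProbabilityMeasure μ] [IsProbabilityMeasure ν]

lemma lower_bound (γ : Measure (ℝ × ℝ)) [IsProbabilityMeasure γ]
    (h1 : γ.map Prod.fst = μ) (h2 : γ.map Prod.snd = ν) :
    ∫⁻ t, ENNReal.ofReal |(μ (Iic t)).toReal - (ν (Iic t)).toReal|
      ≤ ∫⁻ p, ENNReal.ofReal |p.1 - p.2| ∂γ := by
  rw [swap_lemma γ]
  refine lintegral_mono fun t => ?_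
  have hμt : μ (Iic t) = γ {p : ℝ × ℝ | p.1 ≤ t ∧ p.2 ≤ t} + γ {p : ℝ × ℝ | p.1 ≤ t ∧ t < p.2} := by
    have : μ (Iic t) = γ {p : ℝ × ℝ | p.1 ≤ t} := by
      rw [← h1, Measure.map_apply measurable_fst measurableSet_Iic]; rfl
    rw [this, ← measure_union _ (hA t)]
    · congr 1; ext p; simp only [mem_setOf_eq, mem_union]; constructor
      · intro h; rcases le_or_gt p.2 t with h2 | h2
        · exact Or.inl ⟨h, h2⟩
        · exact Or.inr ⟨h, h2⟩
      · rintro (⟨h, _⟩ | ⟨h, _⟩) <;> exact h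
    · exact fun s hs1 hs2 x hx => absurd ((hs2 hx).2) (not_lt.2 (hs1 hx).2)
  have hνt : ν (Iic t) = γ {p : ℝ × ℝ | p.1 ≤ t ∧ p.2 ≤ t} + γ {p : ℝ × ℝ | p.2 ≤ t ∧ t < p.1} := by
    have : ν (Iic t) = γ {p : ℝ × ℝ | p.2 ≤ t} := by
      rw [← h2, Measure.map_apply measurable_snd measurableSet_Iic]; rfl
    rw [this, ← measure_union _ (hB t)]
    · congr 1; ext p; simp only [mem_setOf_eq, mem_union]; constructor
      · intro h; rcases le_or_gt p.1 t with h2 | h2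
        · exact Or.inl ⟨h2, h⟩
        · exact Or.inr ⟨h, h2⟩
      · rintro (⟨_, h⟩ | ⟨h, _⟩) <;> exact h
    · exact fun s hs1 hs2 x hx => absurd ((hs2 hx).2) (not_lt.2 (hs1 hx).1)
  set a := γ {p : ℝ × ℝ | p.1 ≤ t ∧ t < p.2} with ha
  set b := γ {p : ℝ × ℝ | p.2 ≤ t ∧ t < p.1} with hb
  set c := γ {p : ℝ × ℝ | p.1 ≤ t ∧ p.2 ≤ t} with hc
  have hfin : a ≠ ⊤ := measure_ne_top _ _
  have hfin' : b ≠ ⊤ := measure_ne_top _ _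
  have hfinc : c ≠ ⊤ := measure_ne_top _ _
  rw [hμt, hνt, ENNReal.toReal_add hfinc hfin, ENNReal.toReal_add hfinc hfin']
  have : |c.toReal + a.toReal - (c.toReal + b.toReal)| ≤ a.toReal + b.toReal := by
    rw [add_sub_add_left_eq_sub]
    have h1 := abs_sub a.toReal b.toReal
    rwa [abs_of_nonneg ENNReal.toReal_nonneg, abs_of_nonneg ENNReal.toReal_nonneg] at h1
  calc ENNReal.ofReal |c.toReal + a.toReal - (c.toReal + b.toReal)|
      ≤ ENNReal.ofReal (a.toReal + b.toReal) := ENNReal.ofReal_le_ofReal this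
    _ = ENNReal.ofReal a.toReal + ENNReal.ofReal b.toReal :=
        ENNReal.ofReal_add ENNReal.toReal_nonneg ENNReal.toReal_nonneg
    _ = a + b := by rw [ENNReal.ofReal_toReal hfin, ENNReal.ofReal_toReal hfin']

noncomputable def coup : Measure (ℝ × ℝ) :=
  Measure.map (fun s => (Qf μ s, Qf ν s)) (volume.restrict (Ioo 0 1))

lemma measurable_pair : Measurable (fun s => (Qf μ s, Qf ν s)) :=
  (measurable_Qf μ).prodMk (measurable_Qf ν)

instance : IsProbabilityMeasure (coup μ ν) :=
  Measure.isProbabilityMeasure_map (measurable_pair μ ν).aemeasurable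

lemma coup_fst : (coup μ ν).map Prod.fst = μ := by
  rw [coup, Measure.map_map measurable_fst (measurable_pair μ ν)]
  exact map_Qf μ

lemma coup_snd : (coup μ ν).map Prod.snd = ν := by
  rw [coup, Measure.map_map measurable_snd (measurable_pair μ ν)]
  exact map_Qf ν

lemma coup_exact :
    ∫⁻ p, ENNReal.ofReal |p.1 - p.2| ∂(coup μ ν)
      = ∫⁻ t, ENNReal.ofReal |(μ (Iic t)).toReal - (ν (Iic t)).toReal| := by
  rw [swap_lemma]
  refine lintegral_congr fun t => ?_
  have e1 : coup μ ν {p : ℝ × ℝ | p.1 ≤ t ∧ t < p.2} = ENNReal.ofReal (cdf μ t - cdf ν t) := by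
    rw [coup, Measure.map_apply (measurable_pair μ ν) (hA t),
      Measure.restrict_apply ((measurable_pair μ ν) (hA t))]
    have : (fun s => (Qf μ s, Qf ν s)) ⁻¹' {p : ℝ × ℝ | p.1 ≤ t ∧ t < p.2} ∩ Ioo 0 1
        = Ioc (cdf ν t) (cdf μ t) ∩ Ioo 0 1 := by
      ext s
      simp only [mem_inter_iff, mem_preimage, mem_setOf_eq, mem_Ioc, mem_Ioo]
      constructor
      · rintro ⟨⟨h1, h2⟩, hs⟩
        refine ⟨⟨?_, (Qf_le_iff μ hs.1 hs.2 t).1 h1⟩, hs⟩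
        by_contra hc
        exact absurd ((Qf_le_iff ν hs.1 hs.2 t).2 (not_lt.1 hc)) (not_le.2 h2)
      · rintro ⟨⟨h1, h2⟩, hs⟩
        refine ⟨⟨(Qf_le_iff μ hs.1 hs.2 t).2 h2, not_le.1 fun hc => ?_⟩, hs⟩
        exact absurd ((Qf_le_iff ν hs.1 hs.2 t).1 hc) (not_le.2 h1)
    rw [this, vol_Ioc_inter (cdf_nonneg ν t) (cdf_le_one μ t)]
  have e2 : coup μ ν {p : ℝ × ℝ | p.2 ≤ t ∧ t < p.1} = ENNReal.ofReal (cdf ν t - cdf μ t) := by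
    rw [coup, Measure.map_apply (measurable_pair μ ν) (hB t),
      Measure.restrict_apply ((measurable_pair μ ν) (hB t))]
    have : (fun s => (Qf μ s, Qf ν s)) ⁻¹' {p : ℝ × ℝ | p.2 ≤ t ∧ t < p.1} ∩ Ioo 0 1
        = Ioc (cdf μ t) (cdf ν t) ∩ Ioo 0 1 := by
      ext s
      simp only [mem_inter_iff, mem_preimage, mem_setOf_eq, mem_Ioc, mem_Ioo]
      constructor
      · rintro ⟨⟨h1, h2⟩, hs⟩
        refine ⟨⟨?_, (Qf_le_iff ν hs.1 hs.2 t).1 h1⟩, hs⟩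
        by_contra hc
        exact absurd ((Qf_le_iff μ hs.1 hs.2 t).2 (not_lt.1 hc)) (not_le.2 h2)
      · rintro ⟨⟨h1, h2⟩, hs⟩
        refine ⟨⟨(Qf_le_iff ν hs.1 hs.2 t).2 h2, not_le.1 fun hc => ?_⟩, hs⟩
        exact absurd ((Qf_le_iff μ hs.1 hs.2 t).1 hc) (not_le.2 h1)
    rw [this, vol_Ioc_inter (cdf_nonneg μ t) (cdf_le_one ν t)]
  rw [e1, e2, cdf_eq_real, cdf_eq_real, measureReal_def, measureReal_def]
  rcases le_total ((μ (Iic t)).toReal) ((ν (Iic t)).toReal) with h | h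
  · rw [abs_of_nonpos (sub_nonpos.2 h), neg_sub,
      ENNReal.ofReal_of_nonpos (sub_nonpos.2 h), zero_add]
  · rw [abs_of_nonneg (sub_nonneg.2 h),
      ENNReal.ofReal_of_nonpos (sub_nonpos.2 h), add_zero]

end coupling

/-- In dimension one, the L¹-Wasserstein distance between two probability measures with
finite first moments equals the L¹ distance between their cumulative distribution
functions: `W₁(μ, ν) = ∫ |F_μ(x) − F_ν(x)| dx`. -/
theorem stmt2 (μ ν : Measure ℝ) [IsProbabilityMeasure μ] [IsProbabilityMeasure ν]
    (hμ : Integrable (fun x : ℝ => |x|) μ) (hν : Integrable (fun x : ℝ => |x|) ν) :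
    W1 μ ν = ENNReal.ofReal
      (∫ x : ℝ, |(μ (Set.Iic x)).toReal - (ν (Set.Iic x)).toReal|) := by
  set f : ℝ → ℝ := fun t => |(μ (Set.Iic t)).toReal - (ν (Set.Iic t)).toReal| with hf
  set L : ℝ≥0∞ := ∫⁻ t, ENNReal.ofReal (f t) with hL
  -- W1 = L
  have hW : W1 μ ν = L := by
    refine le_antisymm ?_ ?_
    · refine iInf₂_le_of_le (coup μ ν) ⟨coup_fst μ ν, coup_snd μ ν⟩ ?_
      exact le_of_eq (coup_exact μ ν)
    · refine le_iInf fun γ => le_iInf fun hγ => ?_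
      haveI : IsProbabilityMeasure γ := by
        constructor
        rw [← Set.preimage_univ (f := @Prod.fst ℝ ℝ),
          ← Measure.map_apply measurable_fst MeasurableSet.univ, hγ.1, measure_univ]
      exact lower_bound μ ν γ hγ.1 hγ.2
  -- L < ∞
  have habs : Measurable fun x : ℝ => ENNReal.ofReal |x| :=
    measurable_abs.ennreal_ofReal
  have hfin1 : ∫⁻ x, ENNReal.ofReal |x| ∂μ < ⊤ := by
    have := hμ.hasFiniteIntegral
    rwa [hasFiniteIntegral_iff_ofReal (Eventually.of_forall fun x => abs_nonneg x)] at this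
  have hfin2 : ∫⁻ x, ENNReal.ofReal |x| ∂ν < ⊤ := by
    have := hν.hasFiniteIntegral
    rwa [hasFiniteIntegral_iff_ofReal (Eventually.of_forall fun x => abs_nonneg x)] at this
  have hLfin : L ≠ ⊤ := by
    have hle : L ≤ ∫⁻ x, ENNReal.ofReal |x| ∂μ + ∫⁻ x, ENNReal.ofReal |x| ∂ν := by
      calc L = ∫⁻ p, ENNReal.ofReal |p.1 - p.2| ∂(coup μ ν) := (coup_exact μ ν).symm
        _
          ≤ ∫⁻ (p : ℝ × ℝ), (ENNReal.ofReal |p.1| + ENNReal.ofReal |p.2|) ∂(coup μ ν) := by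
            refine lintegral_mono fun p => ?_
            rw [← ENNReal.ofReal_add (abs_nonneg _) (abs_nonneg _)]
            exact ENNReal.ofReal_le_ofReal (abs_sub _ _)
        _ = ∫⁻ (p : ℝ × ℝ), ENNReal.ofReal |p.1| ∂(coup μ ν)
              + ∫⁻ (p : ℝ × ℝ), ENNReal.ofReal |p.2| ∂(coup μ ν) :=
            lintegral_add_left (habs.comp measurable_fst) _
        _ = ∫⁻ x, ENNReal.ofReal |x| ∂((coup μ ν).map Prod.fst)
              + ∫⁻ x, ENNReal.ofReal |x| ∂((coup μ ν).map Prod.snd) := by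
            rw [lintegral_map habs measurable_fst, lintegral_map habs measurable_snd]
        _ = ∫⁻ x, ENNReal.ofReal |x| ∂μ + ∫⁻ x, ENNReal.ofReal |x| ∂ν := by
            rw [coup_fst μ ν, coup_snd μ ν]
    exact ne_top_of_le_ne_top (ENNReal.add_ne_top.2 ⟨hfin1.ne, hfin2.ne⟩) hle
  have h1 : Monotone fun t : ℝ => (μ (Iic t)).toReal := fun a b hab =>
    ENNReal.toReal_mono (measure_ne_top μ _) (measure_mono (Iic_subset_Iic.2 hab))
  have h2 : Monotone fun t : ℝ => (ν (Iic t)).toReal := fun a b hab =>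
    ENNReal.toReal_mono (measure_ne_top ν _) (measure_mono (Iic_subset_Iic.2 hab))
  have hm : Measurable f := (h1.measurable.sub h2.measurable).abs
  have hnn : 0 ≤ᵐ[volume] f := Eventually.of_forall fun t => abs_nonneg _
  have hint : Integrable f := by
    refine ⟨hm.aestronglyMeasurable, ?_⟩
    rw [hasFiniteIntegral_iff_ofReal hnn]
    exact lt_top_iff_ne_top.2 hLfin
  rw [hW, MeasureTheory.ofReal_integral_eq_lintegral_ofReal hint hnn]
end

section
/- Let f_V(v; β) := (2/π) sin(πβ/2) · v^{β−1} / (1 + v^{2β} + 2 v^β cos(πβ/2)) for v > 0 and 0 < β < 2. Then for every v ∈ (0,1) and every γ ∈ (0,1), E(v) := ∫₀^v u f_V(u;β) du ≥ c v^{1+β} for a constant c > 0 depending only on β and γ. -/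
open MeasureTheory Real Set

/-- The mixing density of the Linnik distribution of index `β ∈ (0,2)` as a scale mixture
of Laplace densities. -/
noncomputable def fV (β v : ℝ) : ℝ :=
  (2 / Real.pi) * Real.sin (Real.pi * β / 2) * v ^ (β - 1) /
    (1 + v ^ (2 * β) + 2 * v ^ β * Real.cos (Real.pi * β / 2))

/-- Lower bound on the truncated first moment of the Linnik mixing density: for every
`γ ∈ (0,1)` there is `c > 0` (depending only on `β` and `γ`) with
`E(v) = ∫₀^v u f_V(u;β) du ≥ c v^{1+β}` for all `v ∈ (0,1)`. -/
theorem stmt8 (β : ℝ) (hβ0 : 0 < β) (hβ2 : β < 2) (γ : ℝ) (hγ0 : 0 < γ) (hγ1 : γ < 1) :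
    ∃ c : ℝ, 0 < c ∧ ∀ v : ℝ, 0 < v → v < 1 →
      c * v ^ (1 + β) ≤ ∫ u in Set.Ioc (0:ℝ) v, u * fV β u := by
  have hπ : (0:ℝ) < Real.pi := Real.pi_pos
  set s := Real.sin (Real.pi * β / 2) with hs_def
  have hs : 0 < s := Real.sin_pos_of_pos_of_lt_pi (by positivity) (by nlinarith)
  set C := (2 / Real.pi) * s with hC_def
  have hC : 0 < C := by positivity
  refine ⟨C / (4 * (1 + β)), by positivity, ?_⟩
  intro v hv0 hv1
  have hmeas : MeasurableSet (Set.Ioc (0:ℝ) v) := measurableSet_Ioc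
  set co := Real.cos (Real.pi * β / 2) with hco_def
  have hco1 : co ≤ 1 := Real.cos_le_one _
  have hsc : s ^ 2 + co ^ 2 = 1 := Real.sin_sq_add_cos_sq _
  -- pointwise bounds
  have bounds : ∀ u ∈ Set.Ioc (0:ℝ) v,
      0 ≤ u * fV β u ∧ u * fV β u ≤ (C / s ^ 2) * u ^ β ∧ C / 4 * u ^ β ≤ u * fV β u := by
    intro u hu
    obtain ⟨hu0, huv⟩ := hu
    have hu1 : u ≤ 1 := le_of_lt (lt_of_le_of_lt huv hv1)
    set x := u ^ β with hx_def
    have hx0 : 0 < x := Real.rpow_pos_of_pos hu0 β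
    have hx1 : x ≤ 1 := Real.rpow_le_one hu0.le hu1 hβ0.le
    have hx2 : u ^ (2 * β) = x * x := by rw [two_mul, Real.rpow_add hu0]
    have hmul : u * u ^ (β - 1) = x := by
      have h := Real.rpow_add hu0 1 (β - 1)
      rw [Real.rpow_one, show (1:ℝ) + (β - 1) = β by ring] at h
      exact h.symm
    set D := 1 + u ^ (2 * β) + 2 * u ^ β * co with hD_def
    have hDeq : D = 1 + x * x + 2 * x * co := by rw [hD_def, hx2]
    have hDpos : 0 < D := by rw [hDeq]; nlinarith [sq_nonneg (x + co), mul_pos hs hs]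
    have hDs : s ^ 2 ≤ D := by rw [hDeq]; nlinarith [sq_nonneg (x + co)]
    have hD4 : D ≤ 4 := by rw [hDeq]; nlinarith
    have hfv : u * fV β u = C * x / D := by
      rw [fV, ← hs_def, ← hco_def, ← hC_def, ← hD_def]
      field_simp
      exact hmul
    refine ⟨?_, ?_, ?_⟩
    · rw [hfv]; positivity
    · rw [hfv]
      calc C * x / D ≤ C * x / s ^ 2 :=
            div_le_div_of_nonneg_left (by positivity) (by positivity) hDs
        _ = C / s ^ 2 * x := by ring
    · rw [hfv]
      calc C / 4 * x = C * x / 4 := by ring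
        _ ≤ C * x / D := div_le_div_of_nonneg_left (by positivity) hDpos hD4
  -- integrability of u^β on Ioc 0 v
  have hrint : IntegrableOn (fun u : ℝ => u ^ β) (Set.Ioc 0 v) := by
    have h := intervalIntegral.intervalIntegrable_rpow' (r := β) (a := 0) (b := v)
      (by linarith)
    exact (intervalIntegrable_iff_integrableOn_Ioc_of_le (μ := volume) hv0.le).mp h
  have hg : IntegrableOn (fun u : ℝ => C / 4 * u ^ β) (Set.Ioc 0 v) := hrint.const_mul _
  have hg' : IntegrableOn (fun u : ℝ => C / s ^ 2 * u ^ β) (Set.Ioc 0 v) := hrint.const_mul _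
  have hfmeas : AEStronglyMeasurable (fun u : ℝ => u * fV β u)
      (volume.restrict (Set.Ioc (0:ℝ) v)) := by
    apply Measurable.aestronglyMeasurable
    unfold fV
    fun_prop
  have hfint : IntegrableOn (fun u : ℝ => u * fV β u) (Set.Ioc 0 v) := by
    refine hg'.integrable.mono' hfmeas ?_
    filter_upwards [ae_restrict_mem hmeas] with u hu
    rw [Real.norm_eq_abs, abs_of_nonneg (bounds u hu).1]
    exact (bounds u hu).2.1
  have hmono : (∫ u in Set.Ioc (0:ℝ) v, C / 4 * u ^ β) ≤ ∫ u in Set.Ioc (0:ℝ) v, u * fV β u :=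
    setIntegral_mono_on hg hfint hmeas fun u hu => (bounds u hu).2.2
  refine le_trans (le_of_eq ?_) hmono
  rw [← intervalIntegral.integral_of_le hv0.le,
    intervalIntegral.integral_const_mul, integral_rpow (Or.inl (by linarith)),
    Real.zero_rpow (by linarith)]
  rw [show (1:ℝ) + β = β + 1 by ring]
  field_simp
  ring
end
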